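/- For the exponentially weighted average (EWA) forecaster with learning rate η > 0 over K experts, if the loss function is convex in the prediction and takes values in [0,1], then for any horizon T ≥ 1 the regret with respect to the best fixed expert satisfies R_T ≤ log(K)/η + ηT/8. -/

import Mathlib

/-- **EWA regret bound.** For the exponentially weighted average forecaster with
learning rate `η > 0` over `K` experts, if the loss function is convex in the
prediction and takes values in `[0,1]`, then for any horizon `T ≥ 1` the regret
with respect to any fixed expert `k` satisfies `R_T(k) ≤ log K / η + η T / 8`. -/
private lemma hoeffding_one_dim (μ : ℝ) (hμ0 : 0 ≤ μ) (hμ1 : μ ≤ 1) (h : ℝ) (hh : h ≤ 0) :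
    Real.log (1 - μ + μ * Real.exp h) ≤ μ * h + h ^ 2 / 8 := by
  set φ : ℝ → ℝ := fun x => 1 - μ + μ * Real.exp x with hφ
  have hφpos : ∀ x, 0 < φ x := by
    intro x
    show 0 < 1 - μ + μ * Real.exp x
    rcases le_or_gt (Real.exp x) 1 with he | he
    · nlinarith [Real.exp_pos x, mul_nonneg (sub_nonneg.2 hμ1) (sub_nonneg.2 he)]
    · nlinarith [mul_nonneg hμ0 (by linarith : (0:ℝ) ≤ Real.exp x - 1)]
  set g : ℝ → ℝ := fun x => μ * x + x ^ 2 / 8 - Real.log (φ x) with hg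
  set g1 : ℝ → ℝ := fun x => μ + x / 4 - μ * Real.exp x / φ x with hg1
  have hφd : ∀ x, HasDerivAt φ (μ * Real.exp x) x := by
    intro x
    exact ((Real.hasDerivAt_exp x).const_mul μ).const_add (1 - μ)
  have hgd : ∀ x, HasDerivAt g (g1 x) x := by
    intro x
    have hlog : HasDerivAt (fun x => Real.log (φ x)) (μ * Real.exp x / φ x) x :=
      (hφd x).log (hφpos x).ne'
    have h1 : HasDerivAt (fun x : ℝ => μ * x + x ^ 2 / 8) (μ + x / 4) x := by
      have := ((hasDerivAt_id x).const_mul μ).add ((hasDerivAt_pow 2 x).div_const 8)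
      refine this.congr_deriv ?_
      norm_num
      ring
    exact h1.sub hlog
  have hg1d : ∀ x, HasDerivAt g1 (1/4 - μ * Real.exp x * (1 - μ) / (φ x) ^ 2) x := by
    intro x
    have hnum : HasDerivAt (fun x => μ * Real.exp x) (μ * Real.exp x) x :=
      (Real.hasDerivAt_exp x).const_mul μ
    have hdiv : HasDerivAt (fun x => μ * Real.exp x / φ x)
        ((μ * Real.exp x * φ x - μ * Real.exp x * (μ * Real.exp x)) / (φ x) ^ 2) x :=
      hnum.div (hφd x) (hφpos x).ne'
    have h1 : HasDerivAt (fun x : ℝ => μ + x / 4) (1/4) x := by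
      simpa using ((hasDerivAt_id x).div_const 4).const_add μ
    have := h1.sub hdiv
    refine this.congr_deriv ?_
    have hx0 : (0:ℝ) < 1 - μ + μ * Real.exp x := hφpos x
    simp only [hφ]
    field_simp
    ring
  have hg1mono : Monotone g1 := by
    apply monotone_of_deriv_nonneg (fun x => (hg1d x).differentiableAt)
    intro x
    rw [(hg1d x).deriv]
    have hb : 0 ≤ μ * Real.exp x := mul_nonneg hμ0 (Real.exp_pos x).le
    rw [sub_nonneg, div_le_iff₀ (pow_pos (hφpos x) 2)]
    simp only [hφ]
    nlinarith [sq_nonneg (1 - μ - μ * Real.exp x)]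
  have hg10 : g1 0 = 0 := by simp [hg1, hφ]
  have hganti : AntitoneOn g (Set.Iic 0) := by
    apply antitoneOn_of_deriv_nonpos (convex_Iic 0)
    · exact (Differentiable.continuous fun x => (hgd x).differentiableAt).continuousOn
    · intro x hx
      exact (hgd x).differentiableAt.differentiableWithinAt
    · intro x hx
      rw [(hgd x).deriv]
      have : g1 x ≤ g1 0 := hg1mono (le_of_lt (by simpa using hx))
      linarith [hg10]
  have hg0 : g 0 = 0 := by simp [hg, hφ]
  have := hganti (Set.mem_Iic.2 hh) (Set.mem_Iic.2 le_rfl) hh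
  rw [hg0] at this
  have : 0 ≤ g h := this
  simp only [hg, hφ] at this
  linarith

private lemma ewa_hoeffding_sum {K : ℕ} (p x : Fin K → ℝ) (hp : ∀ j, 0 ≤ p j)
    (hsum : ∑ j, p j = 1) (hx0 : ∀ j, 0 ≤ x j) (hx1 : ∀ j, x j ≤ 1)
    (η : ℝ) (hη : 0 < η) :
    Real.log (∑ j, p j * Real.exp (-η * x j)) ≤
      -η * ∑ j, p j * x j + η ^ 2 / 8 := by
  set μ := ∑ j, p j * x j with hμ
  have hμ0 : 0 ≤ μ := Finset.sum_nonneg fun j _ => mul_nonneg (hp j) (hx0 j)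
  have hμ1 : μ ≤ 1 := by
    rw [← hsum]
    exact Finset.sum_le_sum fun j _ => mul_le_of_le_one_right (hp j) (hx1 j)
  have hstep : ∑ j, p j * Real.exp (-η * x j) ≤ 1 - μ + μ * Real.exp (-η) := by
    have hpt : ∀ j, p j * Real.exp (-η * x j) ≤
        p j - p j * x j + (p j * x j) * Real.exp (-η) := by
      intro j
      have h1 : (0:ℝ) ≤ 1 - x j := by linarith [hx1 j]
      have h := convexOn_exp.2 (Set.mem_univ (0:ℝ)) (Set.mem_univ (-η)) h1 (hx0 j) (by ring)
      simp only [smul_eq_mul] at h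
      have e1 : (1 - x j) * 0 + x j * (-η) = -η * x j := by ring
      rw [e1, Real.exp_zero, mul_one] at h
      nlinarith [hp j, mul_le_mul_of_nonneg_left h (hp j)]
    calc ∑ j, p j * Real.exp (-η * x j)
        ≤ ∑ j, (p j - p j * x j + (p j * x j) * Real.exp (-η)) :=
          Finset.sum_le_sum fun j _ => hpt j
      _ = 1 - μ + μ * Real.exp (-η) := by
          rw [Finset.sum_add_distrib, Finset.sum_sub_distrib, hsum, ← Finset.sum_mul]
  have hpos : 0 < ∑ j, p j * Real.exp (-η * x j) := by
    have he : Real.exp (-η) = ∑ j, p j * Real.exp (-η) := by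
      rw [← Finset.sum_mul, hsum, one_mul]
    calc (0:ℝ) < Real.exp (-η) := Real.exp_pos _
      _ = ∑ j, p j * Real.exp (-η) := he
      _ ≤ ∑ j, p j * Real.exp (-η * x j) := by
          refine Finset.sum_le_sum fun j _ => ?_
          refine mul_le_mul_of_nonneg_left (Real.exp_le_exp.2 ?_) (hp j)
          nlinarith [hx1 j, hη.le]
  calc Real.log (∑ j, p j * Real.exp (-η * x j))
      ≤ Real.log (1 - μ + μ * Real.exp (-η)) := Real.log_le_log hpos hstep
    _ ≤ μ * (-η) + (-η) ^ 2 / 8 := hoeffding_one_dim μ hμ0 hμ1 (-η) (by linarith)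
    _ = -η * μ + η ^ 2 / 8 := by ring

theorem ewa_regret_bound
    (K T : ℕ) (hK : 0 < K) (hT : 1 ≤ T)
    (η : ℝ) (hη : 0 < η)
    (E : Type*) [AddCommGroup E] [Module ℝ E]
    -- `L t` is the loss function at round `t`, as a function of the prediction
    (L : ℕ → E → ℝ)
    (hconv : ∀ t, ConvexOn ℝ Set.univ (L t))
    (hrange : ∀ t e, L t e ∈ Set.Icc (0 : ℝ) 1)
    -- expert predictions
    (pred : Fin K → ℕ → E)
    -- EWA weights
    (p : ℕ → Fin K → ℝ)
    (hp0 : ∀ k, p 0 k = 1 / K)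
    (hprec : ∀ t k, p (t + 1) k =
      p t k * Real.exp (-η * L t (pred k t)) /
        ∑ j, p t j * Real.exp (-η * L t (pred j t)))
    (k : Fin K) :
    ∑ t ∈ Finset.range T,
        (L t (∑ j, p t j • pred j t) - L t (pred k t))
      ≤ Real.log K / η + η * T / 8 := by
  have hKpos : (0:ℝ) < K := Nat.cast_pos.2 hK
  set w : ℕ → Fin K → ℝ :=
    fun t j => (1 / K) * Real.exp (-η * ∑ s ∈ Finset.range t, L s (pred j s)) with hw
  set W : ℕ → ℝ := fun t => ∑ j, w t j with hWdef
  have hwpos : ∀ t j, 0 < w t j :=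
    fun t j => mul_pos (div_pos one_pos hKpos) (Real.exp_pos _)
  have hWpos : ∀ t, 0 < W t :=
    fun t => Finset.sum_pos (fun j _ => hwpos t j) ⟨k, Finset.mem_univ k⟩
  have hWne : ∀ t, W t ≠ 0 := fun t => (hWpos t).ne'
  have hwstep : ∀ t j, w (t + 1) j = w t j * Real.exp (-η * L t (pred j t)) := by
    intro t j
    simp only [hw, Finset.sum_range_succ, mul_add, Real.exp_add]
    ring
  have hpw : ∀ t j, p t j = w t j / W t := by
    intro t
    induction t with
    | zero =>
      intro j
      have hW0 : W 0 = 1 := by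
        simp only [hWdef, hw, Finset.sum_range_zero, mul_zero, Real.exp_zero, mul_one,
          Finset.sum_const, Finset.card_univ, Fintype.card_fin, nsmul_eq_mul]
        field_simp
      simp [hp0, hW0, hw]
    | succ t ih =>
      intro j
      have hd : ∑ i, p t i * Real.exp (-η * L t (pred i t)) = W (t + 1) / W t := by
        have : ∀ i, p t i * Real.exp (-η * L t (pred i t)) = w (t + 1) i / W t := by
          intro i
          rw [ih i, hwstep t i]
          ring
        simp_rw [this]
        rw [← Finset.sum_div]
      rw [hprec t j, hd, ih j, hwstep t j]
      rw [div_mul_eq_mul_div, div_div_div_cancel_right₀ (hWne t)]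
  have hppos : ∀ t j, 0 < p t j := fun t j => by
    rw [hpw t j]; exact div_pos (hwpos t j) (hWpos t)
  have hpsum : ∀ t, ∑ j, p t j = 1 := by
    intro t
    simp_rw [hpw t]
    rw [← Finset.sum_div, div_self (hWpos t).ne']
  have hlogstep : ∀ t, Real.log (W (t + 1)) - Real.log (W t) ≤
      -η * L t (∑ j, p t j • pred j t) + η ^ 2 / 8 := by
    intro t
    have hspos : 0 < ∑ j, p t j * Real.exp (-η * L t (pred j t)) :=
      Finset.sum_pos (fun j _ => mul_pos (hppos t j) (Real.exp_pos _)) ⟨k, Finset.mem_univ k⟩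
    have hWeq : W (t + 1) = W t * ∑ j, p t j * Real.exp (-η * L t (pred j t)) := by
      rw [Finset.mul_sum]
      refine Finset.sum_congr rfl fun j _ => ?_
      rw [hpw t j, hwstep t j, div_mul_eq_mul_div, mul_div_assoc']
      rw [mul_comm (W t) _, mul_div_assoc, div_self (hWne t), mul_one]
    have h1 : Real.log (W (t + 1)) - Real.log (W t) =
        Real.log (∑ j, p t j * Real.exp (-η * L t (pred j t))) := by
      rw [hWeq, Real.log_mul (hWpos t).ne' hspos.ne']
      ring
    have h2 := ewa_hoeffding_sum (p t) (fun j => L t (pred j t))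
      (fun j => (hppos t j).le) (hpsum t)
      (fun j => (hrange t _).1) (fun j => (hrange t _).2) η hη
    have h3 : L t (∑ j, p t j • pred j t) ≤ ∑ j, p t j * L t (pred j t) :=
      (hconv t).map_sum_le (fun j _ => (hppos t j).le) (hpsum t) (fun j _ => Set.mem_univ _)
    rw [h1]
    have h4 : -η * ∑ j, p t j * L t (pred j t) ≤ -η * L t (∑ j, p t j • pred j t) := by
      have := mul_le_mul_of_nonneg_left h3 hη.le
      linarith
    exact h2.trans (by linarith)
  -- telescoping
  have htel : Real.log (W T) - Real.log (W 0) =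
      ∑ t ∈ Finset.range T, (Real.log (W (t + 1)) - Real.log (W t)) :=
    (Finset.sum_range_sub (fun t => Real.log (W t)) T).symm
  have hW0 : W 0 = 1 := by
    simp only [hWdef, hw, Finset.sum_range_zero, mul_zero, Real.exp_zero, mul_one,
      Finset.sum_const, Finset.card_univ, Fintype.card_fin, nsmul_eq_mul]
    field_simp
  have hup : Real.log (W T) ≤
      -η * ∑ t ∈ Finset.range T, L t (∑ j, p t j • pred j t) + T * (η ^ 2 / 8) := by
    have hs := Finset.sum_le_sum (fun t (_ : t ∈ Finset.range T) => hlogstep t)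
    rw [← htel, hW0, Real.log_one, sub_zero] at hs
    calc Real.log (W T) ≤
        ∑ t ∈ Finset.range T, (-η * L t (∑ j, p t j • pred j t) + η ^ 2 / 8) := hs
      _ = -η * ∑ t ∈ Finset.range T, L t (∑ j, p t j • pred j t) + T * (η ^ 2 / 8) := by
          rw [Finset.sum_add_distrib, ← Finset.mul_sum, Finset.sum_const,
            Finset.card_range, nsmul_eq_mul]
  have hlow : -Real.log K - η * ∑ t ∈ Finset.range T, L t (pred k t) ≤ Real.log (W T) := by
    have hle : w T k ≤ W T := Finset.single_le_sum (fun j _ => (hwpos T j).le) (Finset.mem_univ k)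
    have hlogw : Real.log (w T k) =
        -Real.log K - η * ∑ t ∈ Finset.range T, L t (pred k t) := by
      simp only [hw]
      rw [Real.log_mul (by positivity) (Real.exp_ne_zero _), Real.log_exp, one_div,
        Real.log_inv]
      ring
    rw [← hlogw]
    exact Real.log_le_log (hwpos T k) hle
  rw [Finset.sum_sub_distrib]
  rw [show Real.log K / η + η * T / 8 = (Real.log K + η * (η * T / 8)) / η by
    field_simp]
  rw [le_div_iff₀ hη]
  nlinarith [hup, hlow]
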